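/- Let G be a finite connected simple graph with at least 2 vertices such that any two distinct non-adjacent vertices of G have the same neighborhood. Then the vertex set of G can be partitioned into two disjoint nonempty sets K and L such that every vertex of K is adjacent in G to every vertex of L. -/
import Mathlib


/-- A finite connected simple graph with at least 2 vertices, in which any two distinct
non-adjacent vertices have the same neighborhood, admits a partition of its vertex set
into two disjoint nonempty sets `K` and `L` such that every vertex of `K` is adjacent
to every vertex of `L`. -/
theorem exists_join_decomposition_of_nonadj_same_neighborhood {V : Type*} [Fintype V]
    (G : SimpleGraph V)
    (hcard : 2 ≤ Fintype.card V)
    (hconn : G.Connected)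
    (h : ∀ v w : V, v ≠ w → ¬ G.Adj v w → G.neighborSet v = G.neighborSet w) :
    ∃ K L : Set V, K.Nonempty ∧ L.Nonempty ∧ Disjoint K L ∧ K ∪ L = Set.univ ∧
      ∀ v ∈ K, ∀ w ∈ L, G.Adj v w := by
  obtain ⟨a⟩ := hconn.nonempty
  obtain ⟨b, hb⟩ := Fintype.exists_ne_of_one_lt_card hcard a
  -- a has a neighbor
  obtain ⟨p⟩ := hconn a b
  have hLne : (G.neighborSet a).Nonempty := by
    cases p with
    | nil => exact absurd rfl hb.symm
    | cons h' _ => exact ⟨_, h'⟩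
  refine ⟨(G.neighborSet a)ᶜ, G.neighborSet a, ⟨a, fun ha => G.irrefl ha⟩, hLne,
    disjoint_compl_left, Set.compl_union_self _, ?_⟩
  intro v hv w hw
  rcases eq_or_ne v a with rfl | hva
  · exact hw
  · have := h v a hva (fun hadj => hv hadj.symm)
    have hw2 : w ∈ G.neighborSet v := this ▸ hw
    exact hw2
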